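/- For m ≥ 1 and n ≥ 0, n! · Σ_{T} Π_{v∈I(T)} 1/h_v = Π_{i=0}^{n−1} (mi+1), where the sum is over all complete (m+1)-ary trees T with n internal vertices. -/

import Mathlib

open Polynomial

inductive PlaneTree : Type where
  | node : List PlaneTree → PlaneTree

namespace PlaneTree

/-- total number of vertices -/
def numVertices : PlaneTree → ℕ
  | node ts => 1 + (ts.attach.map (fun t => numVertices t.1)).sum
decreasing_by simp only [PlaneTree.node.sizeOf_spec]; exact Nat.lt_add_left 1 (List.sizeOf_lt_of_mem t.2)

/-- number of internal vertices (vertices with at least one child) -/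
def numInternal : PlaneTree → ℕ
  | node ts => (if ts.isEmpty then 0 else 1) + (ts.attach.map (fun t => numInternal t.1)).sum
decreasing_by simp only [PlaneTree.node.sizeOf_spec]; exact Nat.lt_add_left 1 (List.sizeOf_lt_of_mem t.2)

/-- product of `g h_v` over all internal vertices `v`, where `h_v` is the number of
internal vertices of the subtree rooted at `v` -/
def internalHookProd {α : Type} [CommMonoid α] (g : ℕ → α) : PlaneTree → α
  | node ts =>
    (if ts.isEmpty then 1 else g (numInternal (node ts))) *
      (ts.attach.map (fun t => internalHookProd g t.1)).prod
decreasing_by simp only [PlaneTree.node.sizeOf_spec]; exact Nat.lt_add_left 1 (List.sizeOf_lt_of_mem t.2)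

/-- product of `g h_v` over all vertices `v`, where `h_v` is the number of
vertices of the subtree rooted at `v` -/
def vertexHookProd {α : Type} [CommMonoid α] (g : ℕ → α) : PlaneTree → α
  | node ts =>
    g (numVertices (node ts)) * (ts.attach.map (fun t => vertexHookProd g t.1)).prod
decreasing_by simp only [PlaneTree.node.sizeOf_spec]; exact Nat.lt_add_left 1 (List.sizeOf_lt_of_mem t.2)

/-- every internal vertex has exactly `a` children -/
def IsFullAry (a : ℕ) : PlaneTree → Prop
  | node ts => (ts.length = 0 ∨ ts.length = a) ∧ ∀ t ∈ ts, IsFullAry a t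

/-- `IsKMAry k m b T`: with the root of `T` viewed as being on a level of parity `b`
(`b = false` meaning even), every vertex on an even level has `k` children and
every vertex on an odd level has `m` or `0` children. -/
def IsKMAry (k m : ℕ) : Bool → PlaneTree → Prop
  | b, node ts =>
    (if b then ts.length = m ∨ ts.length = 0 else ts.length = k) ∧
      ∀ t ∈ ts, IsKMAry k m (!b) t

/-- number of vertices on levels of parity `b`, the root having parity `cur` -/
def parityVertices (b cur : Bool) : PlaneTree → ℕ
  | node ts =>
    (if cur = b then 1 else 0) + (ts.attach.map (fun t => parityVertices b (!cur) t.1)).sum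
termination_by T => sizeOf T
decreasing_by simp only [PlaneTree.node.sizeOf_spec]; exact Nat.lt_add_left 1 (List.sizeOf_lt_of_mem t.2)

/-- number of internal vertices on levels of parity `b`, the root having parity `cur` -/
def parityInternal (b cur : Bool) : PlaneTree → ℕ
  | node ts =>
    (if cur = b ∧ ¬ts.isEmpty then 1 else 0) +
      (ts.attach.map (fun t => parityInternal b (!cur) t.1)).sum
termination_by T => sizeOf T
decreasing_by simp only [PlaneTree.node.sizeOf_spec]; exact Nat.lt_add_left 1 (List.sizeOf_lt_of_mem t.2)

/-- the order of a `(k,m)`-ary tree: the number of internal (crucial) vertices on odd levels -/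
def kmOrder (T : PlaneTree) : ℕ := parityInternal true false T

end PlaneTree


namespace PlaneTree

lemma map_attach' {α} (l : List PlaneTree) (f : PlaneTree → α) :
    l.attach.map (fun t => f t.1) = l.map f := by simp [List.attach_map_val]

lemma numVertices_node (ts : List PlaneTree) :
    numVertices (node ts) = 1 + (ts.map numVertices).sum := by
  rw [numVertices, map_attach']

lemma numInternal_node (ts : List PlaneTree) :
    numInternal (node ts) = (if ts.isEmpty then 0 else 1) + (ts.map numInternal).sum := by
  rw [numInternal, map_attach']

lemma internalHookProd_node {α : Type} [CommMonoid α] (g : ℕ → α) (ts : List PlaneTree) :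
    internalHookProd g (node ts) =
      (if ts.isEmpty then 1 else g (numInternal (node ts))) *
        (ts.map (internalHookProd g)).prod := by
  rw [internalHookProd, map_attach']

theorem ind {P : PlaneTree → Prop} (h : ∀ ts, (∀ t ∈ ts, P t) → P (node ts)) : ∀ T, P T
  | node ts => h ts (fun t ht => ind h t)
decreasing_by simp only [PlaneTree.node.sizeOf_spec]; exact Nat.lt_add_left 1 (List.sizeOf_lt_of_mem ht)

lemma one_le_numVertices (T : PlaneTree) : 1 ≤ numVertices T := by
  cases T with | node ts => rw [numVertices_node]; omega

lemma isFullAry_node {a : ℕ} {ts : List PlaneTree} :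
    IsFullAry a (node ts) ↔ (ts.length = 0 ∨ ts.length = a) ∧ ∀ t ∈ ts, IsFullAry a t := by
  rw [IsFullAry]

lemma list_sum_affine (ts : List PlaneTree) (a : ℕ) (f : PlaneTree → ℕ) :
    (ts.map (fun t => a * f t + 1)).sum = a * (ts.map f).sum + ts.length := by
  induction ts with
  | nil => simp
  | cons t ts ih => simp [ih]; ring

lemma numVertices_of_full {a : ℕ} : ∀ T : PlaneTree, IsFullAry a T →
    numVertices T = a * numInternal T + 1 := by
  refine ind (fun ts ih hf => ?_)
  rw [isFullAry_node] at hf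
  rw [numVertices_node, numInternal_node]
  have : ts.map numVertices = ts.map (fun t => a * numInternal t + 1) :=
    List.map_congr_left fun t ht => ih t ht (hf.2 t ht)
  rw [this, list_sum_affine]
  rcases eq_or_ne ts [] with rfl | hne
  · simp
  · have hlen : ts.length = a := hf.1.resolve_left (by simpa [List.length_eq_zero_iff] using hne)
    have : ts.isEmpty = false := by simpa [List.isEmpty_iff] using hne
    rw [this, hlen]
    simp only [if_neg Bool.false_ne_true]
    ring


lemma finite_lists {α : Type} {s : Set α} (hs : s.Finite) :
    ∀ n : ℕ, {l : List α | l.length ≤ n ∧ ∀ x ∈ l, x ∈ s}.Finite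
  | 0 => Set.Finite.subset (Set.finite_singleton []) (by
      rintro l ⟨hl, -⟩
      simp [List.length_eq_zero_iff.mp (Nat.le_zero.mp hl)])
  | (n+1) => by
      have h1 := (hs.prod (finite_lists hs n)).image (fun p : α × List α => p.1 :: p.2)
      refine Set.Finite.subset (h1.union (Set.finite_singleton [])) ?_
      rintro l ⟨hl, hmem⟩
      cases l with
      | nil => right; simp
      | cons x l =>
          left
          exact ⟨(x, l), ⟨hmem x (by simp),
            ⟨by simpa using Nat.le_of_succ_le_succ hl, fun y hy => hmem y (by simp [hy])⟩⟩, rfl⟩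

theorem finite_numVertices_le : ∀ N : ℕ, {T : PlaneTree | numVertices T ≤ N}.Finite
  | 0 => Set.Finite.subset (Set.finite_empty) (by
      intro T hT
      have := one_le_numVertices T
      simp only [Set.mem_setOf_eq] at hT
      omega)
  | (N+1) => by
      have hL := finite_lists (finite_numVertices_le N) N
      refine Set.Finite.subset (hL.image node) ?_
      intro T hT
      cases T with | node ts =>
      simp only [Set.mem_setOf_eq, numVertices_node] at hT
      have hsum : (ts.map numVertices).sum ≤ N := by omega
      have hlen : ts.length ≤ N := by
        have := List.length_le_sum_of_one_le (ts.map numVertices)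
          (by intro i hi; obtain ⟨t, -, rfl⟩ := List.mem_map.mp hi; exact one_le_numVertices t)
        simp only [List.length_map] at this
        omega
      exact ⟨ts, ⟨hlen, fun t ht => le_trans
        (List.le_sum_of_mem (List.mem_map_of_mem (f := numVertices) ht)) hsum⟩, rfl⟩

lemma finite_full (m n : ℕ) :
    {T : PlaneTree | IsFullAry (m+1) T ∧ numInternal T = n}.Finite := by
  refine (finite_numVertices_le ((m+1)*n+1)).subset ?_
  rintro T ⟨h1, h2⟩
  simp only [Set.mem_setOf_eq]
  rw [numVertices_of_full T h1, h2]

lemma finite_fullList (m k n : ℕ) :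
    {l : List PlaneTree | l.length = k ∧ (∀ t ∈ l, IsFullAry (m+1) t) ∧
      (l.map numInternal).sum = n}.Finite := by
  refine (finite_lists (finite_numVertices_le ((m+1)*n+1)) k).subset ?_
  rintro l ⟨h1, h2, h3⟩
  refine ⟨le_of_eq h1, fun t ht => ?_⟩
  have hint : numInternal t ≤ n := by
    rw [← h3]; exact List.le_sum_of_mem (List.mem_map_of_mem (f := numInternal) ht)
  simp only [Set.mem_setOf_eq]
  rw [numVertices_of_full t (h2 t ht)]
  exact Nat.succ_le_succ (Nat.mul_le_mul_left _ hint)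

noncomputable section

abbrev Sub (m n : ℕ) := {T : PlaneTree // IsFullAry (m+1) T ∧ numInternal T = n}

abbrev SubL (m k n : ℕ) := {l : List PlaneTree // l.length = k ∧
  (∀ t ∈ l, IsFullAry (m+1) t) ∧ (l.map numInternal).sum = n}

instance (m n : ℕ) : Finite (Sub m n) := (finite_full m n).to_subtype
instance (m k n : ℕ) : Finite (SubL m k n) := (finite_fullList m k n).to_subtype
instance (m n : ℕ) : Fintype (Sub m n) := Fintype.ofFinite _
instance (m k n : ℕ) : Fintype (SubL m k n) := Fintype.ofFinite _

def hook : PlaneTree → ℚ := internalHookProd (fun h => 1 / (h : ℚ))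

def S (m n : ℕ) : ℚ := ∑ T : Sub m n, hook T.1
def F (m k n : ℕ) : ℚ := ∑ l : SubL m k n, (l.1.map hook).prod

lemma eq_leaf {a : ℕ} {T : PlaneTree} (h1 : numInternal T = 0) : T = node [] := by
  cases T with | node ts =>
  rw [numInternal_node] at h1
  rcases eq_or_ne ts [] with rfl | hne
  · rfl
  · have : ts.isEmpty = false := by simpa [List.isEmpty_iff] using hne
    rw [this] at h1
    simp at h1

lemma hook_leaf : hook (node []) = 1 := by
  rw [hook, internalHookProd_node]; simp

instance (m : ℕ) : Unique (Sub m 0) where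
  default := ⟨node [], ⟨by rw [isFullAry_node]; simp, by rw [numInternal_node]; simp⟩⟩
  uniq := fun x => Subtype.ext (eq_leaf (a := m+1) x.2.2)

lemma S_zero (m : ℕ) : S m 0 = 1 := by
  rw [S, Fintype.sum_unique]
  exact hook_leaf

instance (m n : ℕ) : Subsingleton (SubL m 0 n) := by
  constructor
  rintro ⟨l, hl⟩ ⟨l', hl'⟩
  apply Subtype.ext
  obtain rfl := List.length_eq_zero_iff.mp hl.1
  obtain rfl := List.length_eq_zero_iff.mp hl'.1
  rfl

lemma F_zero_zero (m : ℕ) : F m 0 0 = 1 := by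
  have : Unique (SubL m 0 0) :=
    { default := ⟨[], by simp, by simp, by simp⟩
      uniq := fun x => Subsingleton.elim _ _ }
  rw [F, Fintype.sum_unique]
  have hd : ((default : SubL m 0 0)).1 = [] := List.length_eq_zero_iff.mp (default : SubL m 0 0).2.1
  rw [hd]
  simp

lemma F_zero_pos (m n : ℕ) (hn : n ≠ 0) : F m 0 n = 0 := by
  have : IsEmpty (SubL m 0 n) := by
    constructor
    rintro ⟨l, h1, h2, h3⟩
    obtain rfl := List.length_eq_zero_iff.mp h1
    simp only [List.map_nil, List.sum_nil] at h3
    exact hn h3.symm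
  rw [F, Finset.univ_eq_empty, Finset.sum_empty]

/-- build a nonempty list of trees from head data -/
def consFun (m k n : ℕ) : (Σ j : Fin (n+1), Sub m j × SubL m k (n - j)) → SubL m (k+1) n :=
  fun x => match x with
    | ⟨⟨j, hj⟩, (T, l)⟩ =>
        ⟨T.1 :: l.1, by simp [l.2.1], fun s hs => by
            rcases List.mem_cons.mp hs with rfl | hs
            exacts [T.2.1, l.2.2.1 s hs], by
          have h1 : (l.1.map numInternal).sum = n - j := l.2.2.2
          have h2 : numInternal T.1 = j := T.2.2
          simp only [List.map_cons, List.sum_cons, h1, h2]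
          omega⟩

lemma consFun_bijective (m k n : ℕ) : Function.Bijective (consFun m k n) := by
  constructor
  · rintro ⟨⟨j1, hj1⟩, ⟨T1, hT1⟩, ⟨l1, hl1⟩⟩ ⟨⟨j2, hj2⟩, ⟨T2, hT2⟩, ⟨l2, hl2⟩⟩ h
    have hv : T1 :: l1 = T2 :: l2 := congrArg Subtype.val h
    injection hv with hT hl
    subst hT; subst hl
    have hj : j1 = j2 := by
      have e1 : numInternal T1 = j1 := hT1.2
      have e2 : numInternal T1 = j2 := hT2.2
      rw [← e1, ← e2]
    subst hj
    rfl
  · rintro ⟨l, hl⟩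
    match l, hl with
    | t :: l, hl =>
      have hsum := hl.2.2
      simp only [List.map_cons, List.sum_cons] at hsum
      refine ⟨⟨⟨numInternal t, by omega⟩,
        (⟨t, hl.2.1 t (by simp), rfl⟩,
         ⟨l, by simpa using hl.1, fun s hs => hl.2.1 s (by simp [hs]), by
            simp only [Fin.val_mk]; omega⟩)⟩, Subtype.ext rfl⟩

lemma F_succ (m k n : ℕ) :
    F m (k+1) n = ∑ j ∈ Finset.range (n+1), S m j * F m k (n - j) := by
  rw [F, ← Fintype.sum_bijective (consFun m k n) (consFun_bijective m k n)
    (fun y => hook y.2.1.1 * (y.2.2.1.map hook).prod)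
    (fun x => (x.1.map hook).prod) ?_]
  · rw [← Finset.univ_sigma_univ, Finset.sum_sigma]
    rw [← Fin.sum_univ_eq_sum_range]
    refine Finset.sum_congr rfl fun j _ => ?_
    rw [Fintype.sum_prod_type, S, F, Finset.sum_mul_sum]
  · rintro ⟨⟨j, hj⟩, ⟨T, hT⟩, ⟨l, hl⟩⟩
    simp [consFun]


def nodeFun (m n : ℕ) (hn : n ≠ 0) : SubL m (m+1) (n-1) → Sub m n := fun l =>
  ⟨node l.1, by rw [isFullAry_node]; exact ⟨Or.inr l.2.1, l.2.2.1⟩, by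
    have hne : l.1.isEmpty = false := by
      have h1 : l.1.length = m + 1 := l.2.1
      rcases eq_or_ne l.1 [] with h | h
      · rw [h] at h1; simp at h1
      · simpa [List.isEmpty_iff] using h
    rw [numInternal_node, hne, l.2.2.2]
    simp only [if_neg Bool.false_ne_true]
    omega⟩

lemma nodeFun_bijective (m n : ℕ) (hn : n ≠ 0) : Function.Bijective (nodeFun m n hn) := by
  constructor
  · rintro ⟨l1, hl1⟩ ⟨l2, hl2⟩ h
    have hv : node l1 = node l2 := congrArg Subtype.val h
    injection hv with hv
    exact Subtype.ext hv
  · rintro ⟨T, hT⟩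
    cases T with | node ts =>
    have hne : ts.isEmpty = false := by
      rcases eq_or_ne ts [] with rfl | h
      · exfalso
        apply hn
        rw [← hT.2, numInternal_node]
        simp
      · simpa [List.isEmpty_iff] using h
    have hint := hT.2
    rw [numInternal_node, hne] at hint
    simp only [if_neg Bool.false_ne_true] at hint
    have hfull := hT.1
    rw [isFullAry_node] at hfull
    have hlen : ts.length = m + 1 := by
      rcases hfull.1 with h | h
      · exfalso; rw [List.length_eq_zero_iff] at h; subst h; simp at hne
      · exact h
    exact ⟨⟨ts, hlen, hfull.2, by omega⟩, Subtype.ext rfl⟩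

lemma S_succ (m n : ℕ) (hn : n ≠ 0) :
    S m n = (1 / (n : ℚ)) * F m (m+1) (n-1) := by
  rw [S, ← Fintype.sum_bijective (nodeFun m n hn) (nodeFun_bijective m n hn)
    (fun l => (1 / (n : ℚ)) * (l.1.map hook).prod) (fun T => hook T.1) ?_]
  · rw [F, Finset.mul_sum]
  · intro l
    have h2 : numInternal (node l.1) = n := (nodeFun m n hn l).2.2
    have hne : l.1.isEmpty = false := by
      have h1 : l.1.length = m + 1 := l.2.1
      rcases eq_or_ne l.1 [] with h | h
      · rw [h] at h1; simp at h1
      · simpa [List.isEmpty_iff] using h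
    show (1 / (n : ℚ)) * (l.1.map hook).prod = hook (node l.1)
    rw [hook, internalHookProd_node, hne, h2]
    simp only [if_neg Bool.false_ne_true]


def P (m : ℕ) (r : ℚ) (n : ℕ) : ℚ := ∏ i ∈ Finset.range n, (r + m * i)

lemma P_zero (m : ℕ) (r : ℚ) : P m r 0 = 1 := by simp [P]

lemma P_succ (m : ℕ) (r : ℚ) (n : ℕ) : P m r (n+1) = P m r n * (r + m * n) := by
  rw [P, Finset.prod_range_succ, P]

lemma vand (m : ℕ) (a b : ℚ) : ∀ n : ℕ,
    ∑ j ∈ Finset.range (n+1), (n.choose j : ℚ) * P m a j * P m b (n-j) = P m (a+b) n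
  | 0 => by simp [P]
  | (n+1) => by
    have IH := vand m a b n
    rw [Finset.sum_range_succ']
    have key : ∀ j ∈ Finset.range (n+1),
        (((n+1).choose (j+1) : ℚ) * P m a (j+1) * P m b (n+1-(j+1))) =
          ((n.choose j : ℚ) * P m a j * P m b (n-j)) * (a + m*j)
          + ((n.choose (j+1) : ℚ) * P m a (j+1) * P m b (n-j)) := by
      intro j hj
      rw [Nat.choose_succ_succ, Nat.cast_add, Nat.succ_sub_succ, P_succ]
      ring
    rw [Finset.sum_congr rfl key, Finset.sum_add_distrib]
    have hG1 := Finset.sum_range_succ' (fun i => (n.choose i : ℚ) * P m a i * P m b (n+1-i)) (n+1)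
    have hG2 := Finset.sum_range_succ (fun i => (n.choose i : ℚ) * P m a i * P m b (n+1-i)) (n+1)
    have hlast : ((n.choose (n+1) : ℚ) * P m a (n+1) * P m b (n+1-(n+1))) = 0 := by
      rw [Nat.choose_succ_self]; simp
    have hB : (∑ j ∈ Finset.range (n+1), ((n.choose (j+1) : ℚ) * P m a (j+1) * P m b (n+1-(j+1))))
          + ((n.choose 0 : ℚ) * P m a 0 * P m b (n+1-0))
        = ∑ i ∈ Finset.range (n+1), ((n.choose i : ℚ) * P m a i * P m b (n+1-i)) := by
      rw [← hG1, hG2, hlast, add_zero]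
    simp only [Nat.succ_sub_succ] at hB
    simp only [Nat.choose_zero_right, Nat.cast_one, P_zero, one_mul, Nat.sub_zero] at hB ⊢
    rw [add_assoc, hB]
    have hC : ∀ i ∈ Finset.range (n+1),
        ((n.choose i : ℚ) * P m a i * P m b (n+1-i))
          = ((n.choose i : ℚ) * P m a i * P m b (n-i)) * (b + m*(n-i : ℕ)) := by
      intro i hi
      have hin : i ≤ n := Nat.lt_succ_iff.mp (Finset.mem_range.mp hi)
      have : n + 1 - i = (n - i) + 1 := by omega
      rw [this, P_succ]
      ring
    rw [Finset.sum_congr rfl hC, ← Finset.sum_add_distrib]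
    have hD : ∀ i ∈ Finset.range (n+1),
        ((n.choose i : ℚ) * P m a i * P m b (n-i)) * (a + m*i)
          + ((n.choose i : ℚ) * P m a i * P m b (n-i)) * (b + m*(n-i : ℕ))
        = ((n.choose i : ℚ) * P m a i * P m b (n-i)) * ((a+b) + m*n) := by
      intro i hi
      have hin : i ≤ n := Nat.lt_succ_iff.mp (Finset.mem_range.mp hi)
      have hcast : ((n - i : ℕ) : ℚ) = (n : ℚ) - i := by
        rw [Nat.cast_sub hin]
      rw [hcast]
      ring
    rw [Finset.sum_congr rfl hD, ← Finset.sum_mul, IH, ← P_succ]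

def c (m k n : ℕ) : ℚ := P m k n / n.factorial

lemma c_zero (m k : ℕ) : c m k 0 = 1 := by simp [c, P]

lemma c_conv (m a b n : ℕ) :
    ∑ j ∈ Finset.range (n+1), c m a j * c m b (n-j) = c m (a+b) n := by
  have hv := vand m a b n
  rw [c, Nat.cast_add, ← hv, Finset.sum_div]
  refine Finset.sum_congr rfl fun j hj => ?_
  have hjn : j ≤ n := Nat.lt_succ_iff.mp (Finset.mem_range.mp hj)
  rw [c, c, Nat.cast_choose ℚ hjn]
  have h1 : (j.factorial : ℚ) ≠ 0 := Nat.cast_ne_zero.mpr (Nat.factorial_ne_zero j)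
  have h2 : ((n-j).factorial : ℚ) ≠ 0 := Nat.cast_ne_zero.mpr (Nat.factorial_ne_zero _)
  have h3 : (n.factorial : ℚ) ≠ 0 := Nat.cast_ne_zero.mpr (Nat.factorial_ne_zero n)
  field_simp

lemma P_one_shift (m n : ℕ) : P m 1 (n+1) = P m (m+1) n := by
  rw [P, Finset.prod_range_succ']
  simp only [Nat.cast_zero, mul_zero, add_zero, mul_one]
  rw [P]
  refine Finset.prod_congr rfl fun i _ => ?_
  push_cast
  ring

lemma c_shift (m n : ℕ) (hn : n ≠ 0) :
    (1 / (n : ℚ)) * c m (m+1) (n-1) = c m 1 n := by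
  obtain ⟨n', rfl⟩ := Nat.exists_eq_succ_of_ne_zero hn
  simp only [Nat.succ_eq_add_one, Nat.add_sub_cancel, c, Nat.factorial_succ]
  push_cast
  rw [← P_one_shift]
  have h1 : ((n' : ℚ) + 1) ≠ 0 := by positivity
  have h2 : (n'.factorial : ℚ) ≠ 0 := Nat.cast_ne_zero.mpr (Nat.factorial_ne_zero n')
  field_simp

lemma c_zero_pos (m n : ℕ) (hn : n ≠ 0) : c m 0 n = 0 := by
  rw [c, P]
  rw [Finset.prod_eq_zero (Finset.mem_range.mpr (Nat.pos_of_ne_zero hn)) (by simp)]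
  simp

theorem F_eq_c (m : ℕ) : ∀ n k, F m k n = c m k n := by
  intro n
  induction n using Nat.strong_induction_on with
  | _ n IH =>
    rcases eq_or_ne n 0 with rfl | hn
    · intro k
      induction k with
      | zero => rw [F_zero_zero, c_zero]
      | succ k ihk =>
          rw [F_succ]
          rw [Finset.sum_range_one, S_zero, Nat.sub_zero, ihk, c_zero, c_zero, one_mul]
    · have hS : ∀ j, j ≤ n → S m j = c m 1 j := by
        intro j hj
        rcases eq_or_ne j 0 with rfl | hj0
        · rw [S_zero, c_zero]
        · rw [S_succ m j hj0, IH (j-1) (by omega) (m+1), c_shift m j hj0]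
      intro k
      induction k with
      | zero => rw [F_zero_pos m n hn, c_zero_pos m n hn]
      | succ k ihk =>
          rw [F_succ]
          have : (k + 1) = 1 + k := by omega
          rw [this, ← c_conv m 1 k n]
          refine Finset.sum_congr rfl fun j hj => ?_
          have hjn : j ≤ n := Nat.lt_succ_iff.mp (Finset.mem_range.mp hj)
          rw [hS j hjn]
          rcases eq_or_ne j 0 with rfl | hj0
          · rw [Nat.sub_zero, ihk]
          · rw [IH (n - j) (by omega) k]

theorem S_eq_c (m n : ℕ) : S m n = c m 1 n := by
  rcases eq_or_ne n 0 with rfl | hn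
  · rw [S_zero, c_zero]
  · rw [S_succ m n hn, F_eq_c m (n-1) (m+1), c_shift m n hn]
end
end PlaneTree

/-- `n! · Σ_T Π_{v∈I(T)} 1/h_v = Π_{i=0}^{n-1} (mi+1)`, summed over all complete
`(m+1)`-ary trees `T` with `n` internal vertices. -/
theorem hook_reciprocal_sum_mary (m n : ℕ) (hm : 1 ≤ m) :
    (n.factorial : ℚ) *
      ∑ᶠ T : {T : PlaneTree // PlaneTree.IsFullAry (m + 1) T ∧ PlaneTree.numInternal T = n},
        PlaneTree.internalHookProd (fun h => 1 / (h : ℚ)) T.1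
      = ∏ i ∈ Finset.range n, ((m * i + 1 : ℕ) : ℚ) := by
  have h1 : ∑ᶠ T : {T : PlaneTree // PlaneTree.IsFullAry (m + 1) T ∧ PlaneTree.numInternal T = n},
      PlaneTree.internalHookProd (fun h => 1 / (h : ℚ)) T.1 = PlaneTree.S m n :=
    finsum_eq_sum_of_fintype _
  rw [h1, PlaneTree.S_eq_c]
  have h3 : (n.factorial : ℚ) ≠ 0 := Nat.cast_ne_zero.mpr (Nat.factorial_ne_zero n)
  have h4 : (n.factorial : ℚ) * PlaneTree.c m 1 n = PlaneTree.P m 1 n := by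
    rw [PlaneTree.c]; field_simp; simp
  rw [h4, PlaneTree.P]
  refine Finset.prod_congr rfl fun i _ => ?_
  push_cast
  ring
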